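/- Suppose y = Xθ* + ε with X ∈ ℝ^{n×p}, and let θ̂ minimize R^adv(θ) = (1/n)∑ᵢ(|yᵢ - xᵢᵀθ| + δ‖θ‖₁)². If δ > 3‖Xᵀε‖_∞/‖ε‖₁, then ‖θ̂‖₁ ≤ 8‖θ*‖₁. -/

import Mathlib

open Matrix

/-- The ℓ∞-adversarial training risk, `(1/n) ∑ᵢ (|yᵢ - xᵢᵀθ| + δ‖θ‖₁)²`
(the ℓ₁-norm is the dual of the ℓ∞-norm). -/
noncomputable def advRiskL1 {n p : ℕ} (X : Matrix (Fin n) (Fin p) ℝ) (y : Fin n → ℝ)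
    (δ : ℝ) (θ : Fin p → ℝ) : ℝ :=
  (1 / n : ℝ) * ∑ i, (|y i - X i ⬝ᵥ θ| + δ * ∑ j, |θ j|) ^ 2

/- On `Fin p → ℝ` the default norm `‖·‖` is the sup (ℓ∞) norm, so
`‖Xᵀ *ᵥ ε‖ = ‖Xᵀε‖_∞`. -/
set_option maxHeartbeats 1000000 in
theorem stmt16 {n p : ℕ} (X : Matrix (Fin n) (Fin p) ℝ)
    (θstar : Fin p → ℝ) (ε : Fin n → ℝ) (hε : ε ≠ 0)
    (y : Fin n → ℝ) (hy : y = X *ᵥ θstar + ε)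
    (δ : ℝ) (hδ : 3 * ‖Xᵀ *ᵥ ε‖ / (∑ i, |ε i|) < δ)
    (θh : Fin p → ℝ)
    (hθh : ∀ θ : Fin p → ℝ, advRiskL1 X y δ θh ≤ advRiskL1 X y δ θ) :
    (∑ j, |θh j|) ≤ 8 * ∑ j, |θstar j| := by
  classical
  -- notation
  set h : ℝ := ∑ j, |θh j| with hh
  set t : ℝ := ∑ j, |θstar j| with ht
  set E : ℝ := ∑ i, |ε i| with hE
  have hh0 : 0 ≤ h := Finset.sum_nonneg fun j _ => abs_nonneg _
  have ht0 : 0 ≤ t := Finset.sum_nonneg fun j _ => abs_nonneg _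
  -- n > 0
  have hn : 0 < n := by
    rcases Nat.eq_zero_or_pos n with h0 | h0
    · exfalso; apply hε; subst h0; funext i; exact i.elim0
    · exact h0
  -- E > 0
  have hEpos : 0 < E := by
    have : ∃ i, ε i ≠ 0 := by
      by_contra hc
      push_neg at hc
      exact hε (funext hc)
    obtain ⟨i0, hi0⟩ := this
    exact Finset.sum_pos' (fun i _ => abs_nonneg _)
      ⟨i0, Finset.mem_univ _, abs_pos.2 hi0⟩
  -- δ > 0 and 3‖Xᵀε‖ ≤ δ E
  have hδ0 : 0 < δ :=
    lt_of_le_of_lt (div_nonneg (by positivity) hEpos.le) hδ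
  have hdual : 3 * ‖Xᵀ *ᵥ ε‖ ≤ δ * E := by
    have := (div_lt_iff₀ hEpos).mp hδ
    linarith [this]
  -- residual at θh
  set r : Fin n → ℝ := fun i => y i - X i ⬝ᵥ θh with hr
  have hyi : ∀ i, y i - X i ⬝ᵥ θstar = ε i := by
    intro i; subst hy; simp [Matrix.mulVec]
  -- basic inequality (multiplied by n)
  have hbasic : (∑ i, (|r i| + δ * h) ^ 2) ≤ ∑ i, (|ε i| + δ * t) ^ 2 := by
    have key := hθh θstar
    simp only [advRiskL1] at key
    have hninv : (0:ℝ) < 1 / n := by positivity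
    have key2 := (mul_le_mul_iff_right₀ hninv).mp key
    calc (∑ i, (|r i| + δ * h) ^ 2)
        = ∑ i, (|y i - X i ⬝ᵥ θh| + δ * ∑ j, |θh j|) ^ 2 := by rfl
      _ ≤ ∑ i, (|y i - X i ⬝ᵥ θstar| + δ * ∑ j, |θstar j|) ^ 2 := key2
      _ = ∑ i, (|ε i| + δ * t) ^ 2 := by
          apply Finset.sum_congr rfl; intro i _; rw [hyi i]
  -- Cauchy–Schwarz step
  set P : ℝ := ∑ i, (|r i| + δ * h) * (|ε i| + δ * t) with hP
  set Sb2 : ℝ := ∑ i, (|ε i| + δ * t) ^ 2 with hSb2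
  have hPnonneg : 0 ≤ P :=
    Finset.sum_nonneg fun i _ => mul_nonneg
      (by positivity) (by positivity)
  have hSb2nonneg : 0 ≤ Sb2 := Finset.sum_nonneg fun i _ => sq_nonneg _
  have hCS : P ^ 2 ≤ Sb2 ^ 2 := by
    have := Finset.sum_mul_sq_le_sq_mul_sq Finset.univ
      (fun i => |r i| + δ * h) (fun i => |ε i| + δ * t)
    calc P ^ 2 ≤ (∑ i, (|r i| + δ * h) ^ 2) * Sb2 := this
      _ ≤ Sb2 * Sb2 := by
          apply mul_le_mul_of_nonneg_right hbasic hSb2nonneg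
      _ = Sb2 ^ 2 := (sq Sb2).symm
  have hPle : P ≤ Sb2 := by nlinarith [hPnonneg, hSb2nonneg, hCS]
  -- pointwise lower bound and its sum
  have hpoint : ∀ i, ε i * r i + δ * h * |ε i| + δ ^ 2 * h * t
      ≤ (|r i| + δ * h) * (|ε i| + δ * t) := by
    intro i
    have h1 : ε i * r i ≤ |r i| * |ε i| := by
      calc ε i * r i ≤ |ε i * r i| := le_abs_self _
        _ = |r i| * |ε i| := by rw [abs_mul, mul_comm]
    have h2 : 0 ≤ δ * t * |r i| := by positivity
    nlinarith [h1, h2]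
  have hsumlow : (∑ i, ε i * r i) + δ * h * E + (n : ℝ) * (δ ^ 2 * h * t) ≤ P := by
    have := Finset.sum_le_sum fun i (_ : i ∈ Finset.univ) => hpoint i
    simpa [Finset.sum_add_distrib, ← Finset.mul_sum, Finset.sum_const,
      Finset.card_univ, nsmul_eq_mul] using this
  -- compute ∑ ε i * r i
  set Δ : Fin p → ℝ := θh - θstar with hΔ
  set D : ℝ := (Xᵀ *ᵥ ε) ⬝ᵥ Δ with hD
  have hrsum : (∑ i, ε i * r i) = (∑ i, ε i ^ 2) - D := by
    have hri : ∀ i, r i = ε i - X i ⬝ᵥ Δ := by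
      intro i
      have : X i ⬝ᵥ Δ = X i ⬝ᵥ θh - X i ⬝ᵥ θstar := by
        simp [hΔ, dotProduct_sub]
      rw [hr]
      have := hyi i
      simp only [hΔ]
      rw [dotProduct_sub]
      linarith [hyi i]
    have hDeq : D = ∑ i, ε i * (X i ⬝ᵥ Δ) := by
      rw [hD, mulVec_transpose, ← dotProduct_mulVec]
      simp [dotProduct, Matrix.mulVec]
    calc (∑ i, ε i * r i) = ∑ i, (ε i ^ 2 - ε i * (X i ⬝ᵥ Δ)) := by
          apply Finset.sum_congr rfl; intro i _; rw [hri i]; ring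
      _ = (∑ i, ε i ^ 2) - ∑ i, ε i * (X i ⬝ᵥ Δ) := by rw [Finset.sum_sub_distrib]
      _ = (∑ i, ε i ^ 2) - D := by rw [hDeq]
  -- expand Sb2
  have hSb2eq : Sb2 = (∑ i, ε i ^ 2) + 2 * δ * t * E + (n : ℝ) * (δ * t) ^ 2 := by
    rw [hSb2]
    have : ∀ i, (|ε i| + δ * t) ^ 2 = ε i ^ 2 + 2 * δ * t * |ε i| + (δ * t) ^ 2 := by
      intro i; rw [← sq_abs (ε i)]; ring
    rw [Finset.sum_congr rfl fun i _ => this i]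
    simp [Finset.sum_add_distrib, ← Finset.mul_sum, Finset.sum_const,
      Finset.card_univ, nsmul_eq_mul, hE]
  -- dual norm bound: D ≤ ‖Xᵀε‖ (h + t)
  have hDle : D ≤ ‖Xᵀ *ᵥ ε‖ * (h + t) := by
    have hstep : D ≤ ∑ j, ‖Xᵀ *ᵥ ε‖ * |Δ j| := by
      rw [hD]
      apply Finset.sum_le_sum
      intro j _
      calc (Xᵀ *ᵥ ε) j * Δ j ≤ |(Xᵀ *ᵥ ε) j * Δ j| := le_abs_self _
        _ = |(Xᵀ *ᵥ ε) j| * |Δ j| := abs_mul _ _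
        _ ≤ ‖Xᵀ *ᵥ ε‖ * |Δ j| := by
            apply mul_le_mul_of_nonneg_right _ (abs_nonneg _)
            exact norm_le_pi_norm (Xᵀ *ᵥ ε) j
    have hΔsum : (∑ j, |Δ j|) ≤ h + t := by
      calc (∑ j, |Δ j|) ≤ ∑ j, (|θh j| + |θstar j|) := by
            apply Finset.sum_le_sum
            intro j _
            simpa [hΔ] using abs_sub (θh j) (θstar j)
        _ = h + t := by rw [Finset.sum_add_distrib]
    calc D ≤ ∑ j, ‖Xᵀ *ᵥ ε‖ * |Δ j| := hstep
      _ = ‖Xᵀ *ᵥ ε‖ * ∑ j, |Δ j| := by rw [Finset.mul_sum]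
      _ ≤ ‖Xᵀ *ᵥ ε‖ * (h + t) := by
          apply mul_le_mul_of_nonneg_left hΔsum (norm_nonneg _)
  have hD3 : 3 * D ≤ δ * E * (h + t) := by
    have h1 := mul_le_mul_of_nonneg_left hDle (by norm_num : (0:ℝ) ≤ 3)
    have h2 := mul_le_mul_of_nonneg_right hdual (by positivity : (0:ℝ) ≤ h + t)
    nlinarith [h1, h2]
  -- assemble
  have hmain : (∑ i, ε i ^ 2) - D + δ * h * E + (n : ℝ) * (δ ^ 2 * h * t)
      ≤ (∑ i, ε i ^ 2) + 2 * δ * t * E + (n : ℝ) * (δ * t) ^ 2 := by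
    rw [← hrsum, ← hSb2eq]
    linarith [hsumlow, hPle]
  -- finish by cases
  rcases le_or_gt h t with hcase | hcase
  · linarith
  · have hncast : (0:ℝ) ≤ (n : ℝ) := Nat.cast_nonneg n
    have hquad : (n : ℝ) * (δ * t) ^ 2 ≤ (n : ℝ) * (δ ^ 2 * h * t) := by
      have : (δ * t) ^ 2 ≤ δ ^ 2 * h * t := by nlinarith [mul_nonneg (mul_nonneg (sq_nonneg δ) ht0) (sub_nonneg.mpr hcase.le)]
      exact mul_le_mul_of_nonneg_left this hncast
    have hlin : δ * h * E ≤ D + 2 * δ * t * E := by linarith [hmain, hquad]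
    have hfin : 3 * (δ * h * E) ≤ δ * E * (h + t) + 6 * δ * t * E := by
      linarith [hD3, hlin]
    have hδE : 0 < δ * E := mul_pos hδ0 hEpos
    nlinarith [hfin, hδE, ht0]
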